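/- If θ ≠ k is an eigenvalue of the adjacency matrix of a normally regular digraph with parameters (v,k,λ,μ), then |θ − (λ−μ)| = √η where η = k − μ + (μ−λ)²; i.e., all eigenvalues other than k lie on a circle in the complex plane with centre λ − μ and radius √η. -/

import Mathlib

open Matrix

/-- The v×v all-ones matrix over ℝ. -/
def allOnes (v : ℕ) : Matrix (Fin v) (Fin v) ℝ := Matrix.of fun _ _ => 1

/-- `A` is the adjacency matrix of a normally regular digraph with parameters
    `(v, k, l, m)` (i.e. `(v, k, λ, μ)`): a {0,1}-matrix with zero diagonal
    satisfying A·Aᵀ = k·I + λ·(A + Aᵀ) + μ·(J − I − A − Aᵀ). -/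
def IsNRD (v : ℕ) (k l m : ℤ) (A : Matrix (Fin v) (Fin v) ℝ) : Prop :=
  (∀ i j, A i j = 0 ∨ A i j = 1) ∧ (∀ i, A i i = 0) ∧
    A * Aᵀ = (k : ℝ) • (1 : Matrix (Fin v) (Fin v) ℝ) + (l : ℝ) • (A + Aᵀ) +
      (m : ℝ) • (allOnes v - 1 - A - Aᵀ)

section NRDhelpers

variable {v : ℕ}

lemma nrd_allOnes_apply (i j : Fin v) : allOnes v i j = 1 := rfl

lemma nrd_transpose_allOnes : (allOnes v)ᵀ = allOnes v := rfl

lemma nrd_allOnes_mul_allOnes : allOnes v * allOnes v = (v:ℝ) • allOnes v := by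
  ext i j; simp [Matrix.mul_apply, allOnes]

lemma nrd_entry_of_eq {M N : Matrix (Fin v) (Fin v) ℝ} (h : M = N) (i j : Fin v) :
    M i j = N i j := by rw [h]

lemma nrd_map_mul_C (M N : Matrix (Fin v) (Fin v) ℝ) :
    (M * N).map Complex.ofReal = M.map Complex.ofReal * N.map Complex.ofReal := by
  ext i j
  simp [Matrix.mul_apply, Matrix.map_apply]

lemma nrd_map_smul_C (r : ℝ) (M : Matrix (Fin v) (Fin v) ℝ) :
    ((r • M).map Complex.ofReal) = (r:ℂ) • M.map Complex.ofReal := by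
  ext i j
  simp [Matrix.map_apply]

lemma nrd_map_one_C : ((1 : Matrix (Fin v) (Fin v) ℝ).map Complex.ofReal) = 1 := by
  ext i j
  by_cases h : i = j <;> simp [Matrix.map_apply, Matrix.one_apply, h]

lemma nrd_mulVec_star_C (B : Matrix (Fin v) (Fin v) ℝ) (x : Fin v → ℂ) :
    (B.map Complex.ofReal) *ᵥ (star x) = star ((B.map Complex.ofReal) *ᵥ x) := by
  ext i
  simp only [Matrix.mulVec, dotProduct, Pi.star_apply, star_sum]
  refine Finset.sum_congr rfl fun j _ => ?_
  simp [Matrix.map_apply, Complex.star_def, Complex.conj_ofReal, mul_comm]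

/-- Key lemma: if B is invertible-regime (η>0, η+μv>0) with BBᵀ = ηI + μJ and constant
row sums κ, then BᵀB = ηI + μJ and the column sums are also κ. -/
lemma nrd_key (hv : 0 < v) (B : Matrix (Fin v) (Fin v) ℝ) (η μ κ : ℝ)
    (hη : 0 < η) (hημ : 0 < η + μ * v)
    (hBB : B * Bᵀ = η • 1 + μ • allOnes v)
    (hBJ : B * allOnes v = κ • allOnes v) :
    Bᵀ * B = η • 1 + μ • allOnes v ∧ allOnes v * B = κ • allOnes v := by
  set J : Matrix (Fin v) (Fin v) ℝ := allOnes v with hJdef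
  have hJJ : J * J = (v:ℝ) • J := nrd_allOnes_mul_allOnes
  have hne : η + μ * v ≠ 0 := ne_of_gt hημ
  have hηne : η ≠ 0 := ne_of_gt hη
  set C : Matrix (Fin v) (Fin v) ℝ := η⁻¹ • 1 + (-μ / (η * (η + μ * v))) • J with hCdef
  have hC : (η • 1 + μ • J) * C = 1 := by
    rw [hCdef]
    rw [Matrix.add_mul, Matrix.mul_add, Matrix.mul_add]
    simp only [Matrix.smul_mul, Matrix.mul_smul, Matrix.mul_one, Matrix.one_mul, hJJ,
      smul_smul]
    have hone : (1 : Matrix (Fin v) (Fin v) ℝ) = (1:ℝ) • 1 + (0:ℝ) • J := by simp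
    rw [hone]
    match_scalars
    · field_simp
    · field_simp
      ring
  have hBC : B * (Bᵀ * C) = 1 := by rw [← Matrix.mul_assoc, hBB, hC]
  have hCB : (Bᵀ * C) * B = 1 := mul_eq_one_comm.mp hBC
  have cancel_left : ∀ M : Matrix (Fin v) (Fin v) ℝ, B * M = 0 → M = 0 := by
    intro M hM
    have := congrArg (fun X => (Bᵀ * C) * X) hM
    simpa [← Matrix.mul_assoc, hCB] using this
  have cancel_right : ∀ M : Matrix (Fin v) (Fin v) ℝ, M * Bᵀ = 0 → M = 0 := by
    intro M hM
    have hBt : Bᵀ * (Cᵀ * B) = 1 := by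
      have := congrArg Matrix.transpose hBC
      simp only [Matrix.transpose_mul, Matrix.transpose_one] at this
      rw [mul_eq_one_comm]
      simpa [Matrix.transpose_transpose, Matrix.mul_assoc] using this
    have := congrArg (fun X => X * (Cᵀ * B)) hM
    simpa [Matrix.mul_assoc, hBt] using this
  set c : ℝ := μ / (η + μ * v) with hcdef
  have hc : c * (η + μ * v) = μ := by rw [hcdef]; field_simp
  set M : Matrix (Fin v) (Fin v) ℝ := Bᵀ*B - η•1 - c•(Bᵀ*J*B) with hMdef
  have e1 : B * (Bᵀ * B) * Bᵀ = (η•1+μ•J) * (η•1+μ•J) := by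
    rw [← Matrix.mul_assoc, Matrix.mul_assoc (B*Bᵀ), hBB]
  have e2 : B * (Bᵀ*J*B) * Bᵀ = (η•1+μ•J)*J*(η•1+μ•J) := by
    calc B * (Bᵀ*J*B) * Bᵀ = ((B*Bᵀ)*J)*(B*Bᵀ) := by
          simp only [Matrix.mul_assoc]
      _ = (η•1+μ•J)*J*(η•1+μ•J) := by rw [hBB]
  have hzero : B * M * Bᵀ = 0 := by
    rw [hMdef]
    rw [Matrix.mul_sub, Matrix.mul_sub, Matrix.sub_mul, Matrix.sub_mul]
    rw [Matrix.mul_smul, Matrix.smul_mul, Matrix.mul_smul, Matrix.smul_mul, Matrix.mul_one]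
    rw [e1, e2, hBB]
    simp only [Matrix.add_mul, Matrix.mul_add, Matrix.smul_mul, Matrix.mul_smul, Matrix.mul_one,
      Matrix.one_mul, hJJ, smul_smul, smul_add, add_smul]
    have hz : (0 : Matrix (Fin v) (Fin v) ℝ) = (0:ℝ) • 1 + (0:ℝ) • J := by simp
    rw [hz]
    match_scalars
    · ring
    · linear_combination (-(η + μ*(v:ℝ))) * hc
  have hM : M = 0 := cancel_left M (cancel_right (B*M) hzero)
  have hN : Bᵀ*B = η•1 + c•(Bᵀ*J*B) := by
    have h' : Bᵀ*B - (η•1 + c•(Bᵀ*J*B)) = 0 := by rw [← sub_sub]; exact hM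
    exact sub_eq_zero.mp h'
  have hNJ1 : (Bᵀ*B)*J = κ•(Bᵀ*J) := by
    rw [Matrix.mul_assoc, hBJ, Matrix.mul_smul]
  have hNJ2 : (η•1 + c•(Bᵀ*J*B))*J = η•J + (c*(κ*v))•(Bᵀ*J) := by
    rw [Matrix.add_mul, Matrix.smul_mul, Matrix.smul_mul, Matrix.one_mul]
    rw [Matrix.mul_assoc (Bᵀ*J) B J, hBJ, Matrix.mul_smul, Matrix.mul_assoc Bᵀ J J, hJJ,
      Matrix.mul_smul, smul_smul, smul_smul]
    ring_nf
  have heq : (κ - c*(κ*v))•(Bᵀ*J) = η•J := by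
    have h12 : κ•(Bᵀ*J) = η•J + (c*(κ*v))•(Bᵀ*J) := by rw [← hNJ1, hN, hNJ2]
    rw [sub_smul, h12]
    abel
  have i0 : Fin v := ⟨0, hv⟩
  set e : ℝ := κ - c*(κ*v) with hedef
  have he2 : e * (η + μ*(v:ℝ)) = κ * η := by
    rw [hedef]; linear_combination (-(κ*(v:ℝ))) * hc
  have hκ : κ ≠ 0 := by
    intro h0
    have h1 := nrd_entry_of_eq heq i0 i0
    rw [hedef, h0] at h1
    simp only [Matrix.smul_apply, smul_eq_mul, hJdef, nrd_allOnes_apply, mul_one] at h1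
    have : (0:ℝ) = η := by
      rw [← h1]; ring
    exact hηne this.symm
  have hecoef : e ≠ 0 := by
    intro h0
    rw [h0, zero_mul] at he2
    exact hκ (by
      rcases mul_eq_zero.mp he2.symm with h | h
      · exact h
      · exact absurd h hηne)
  have hBtJ : Bᵀ*J = (e⁻¹*η)•J := by
    have := congrArg (fun X => e⁻¹ • X) heq
    simpa [smul_smul, inv_mul_cancel₀ hecoef] using this
  set d : ℝ := e⁻¹*η with hddef
  have hJB : J*B = d•J := by
    have : (Bᵀ*J)ᵀ = (d•J)ᵀ := by rw [hBtJ]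
    simpa [Matrix.transpose_mul, Matrix.transpose_smul, hJdef, nrd_transpose_allOnes] using this
  have hdv : d * (v:ℝ) = κ * (v:ℝ) := by
    have e3 : (J*B)*J = (d*v)•J := by rw [hJB, Matrix.smul_mul, hJJ, smul_smul]
    have e4 : J*(B*J) = (κ*v)•J := by rw [hBJ, Matrix.mul_smul, hJJ, smul_smul]
    have e5 : (d*(v:ℝ))•J = (κ*(v:ℝ))•J := by rw [← e3, ← e4, Matrix.mul_assoc]
    have h1 := nrd_entry_of_eq e5 i0 i0
    simpa only [Matrix.smul_apply, smul_eq_mul, hJdef, nrd_allOnes_apply, mul_one] using h1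
  have hvne : ((v:ℝ)) ≠ 0 := Nat.cast_ne_zero.mpr hv.ne'
  have hd : d = κ := mul_right_cancel₀ hvne hdv
  have hJBκ : J*B = κ•J := by rw [hJB, hd]
  have hBtJκ : Bᵀ*J = κ•J := by rw [hBtJ, hd]
  have hkey : κ * e = η := by
    have hκd : κ = e⁻¹ * η := by rw [← hddef, hd]
    rw [hκd]
    field_simp
  have hκ2 : η*(κ*κ) = η*(η+μ*(v:ℝ)) := by
    rw [hedef] at hkey
    linear_combination (η+μ*(v:ℝ))*hkey + (v:ℝ)*κ*κ*hc
  have hκsq : κ*κ = η+μ*(v:ℝ) := mul_left_cancel₀ hηne hκ2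
  have hcκ : c * (κ*κ) = μ := by rw [hκsq]; exact hc
  constructor
  · have hP : Bᵀ*J*B = (κ*κ)•J := by rw [hBtJκ, Matrix.smul_mul, hJBκ, smul_smul]
    rw [hN, hP, smul_smul, hcκ]
  · exact hJBκ

/-- Final step: from BᵀB = ηI + μJ and constant column sums κ, any complex
eigenvalue ν ≠ κ of B has |ν| = √η. -/
lemma nrd_final (hv : 0 < v) (B : Matrix (Fin v) (Fin v) ℝ) (η μ κ : ℝ)
    (hN : Bᵀ * B = η • 1 + μ • allOnes v)
    (hJB : allOnes v * B = κ • allOnes v)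
    (x : Fin v → ℂ) (hx : x ≠ 0) (ν : ℂ)
    (hev : (B.map Complex.ofReal) *ᵥ x = ν • x) (hν : ν ≠ (κ:ℂ)) :
    ‖ν‖ = Real.sqrt η := by
  set Bc := B.map Complex.ofReal with hBcdef
  set Jc := (allOnes v).map Complex.ofReal with hJcdef
  set σ : ℂ := ∑ i, x i with hσdef
  have i0 : Fin v := ⟨0, hv⟩
  have hJx : Jc *ᵥ x = fun _ => σ := by
    ext i
    simp [hJcdef, Matrix.mulVec, dotProduct, allOnes, Matrix.map_apply, hσdef]
  have hσ0 : σ = 0 := by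
    have h1 : Jc *ᵥ (Bc *ᵥ x) = (fun _ => (κ:ℂ) * σ : Fin v → ℂ) := by
      rw [Matrix.mulVec_mulVec, hJcdef, hBcdef, ← nrd_map_mul_C, hJB, nrd_map_smul_C,
        Matrix.smul_mulVec]
      rw [← hJcdef, hJx]
      ext i
      simp
    have h2 : Jc *ᵥ (Bc *ᵥ x) = (fun _ => ν * σ : Fin v → ℂ) := by
      rw [hev, Matrix.mulVec_smul, hJx]
      ext i
      simp
    have h3 : ν * σ = (κ:ℂ) * σ := by
      have := congrFun (h2.symm.trans h1) i0
      exact this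
    have h4 : (ν - (κ:ℂ)) * σ = 0 := by rw [sub_mul, h3, sub_self]
    rcases mul_eq_zero.mp h4 with h | h
    · exact absurd (sub_eq_zero.mp h) hν
    · exact h
  set S : ℝ := ∑ i, Complex.normSq (x i) with hSdef
  have hSx : star x ⬝ᵥ x = (S:ℂ) := by
    rw [hSdef]
    push_cast
    simp only [dotProduct, Pi.star_apply]
    refine Finset.sum_congr rfl fun j _ => ?_
    rw [Complex.star_def, Complex.normSq_eq_conj_mul_self]
  have hS0 : S ≠ 0 := by
    have hex : ∃ i, x i ≠ 0 := Function.ne_iff.mp hx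
    obtain ⟨i, hi⟩ := hex
    have : 0 < S := by
      rw [hSdef]
      refine Finset.sum_pos' (fun j _ => Complex.normSq_nonneg _) ⟨i, Finset.mem_univ i, ?_⟩
      exact Complex.normSq_pos.mpr hi
    exact this.ne'
  have hBtB : Bcᵀ * Bc = (η:ℂ) • 1 + (μ:ℂ) • Jc := by
    rw [hBcdef, hJcdef, ← Matrix.transpose_map, ← nrd_map_mul_C, hN]
    rw [Matrix.map_add _ Complex.ofReal_add, nrd_map_smul_C, nrd_map_smul_C, nrd_map_one_C]
  have wayA : star x ⬝ᵥ ((Bcᵀ * Bc) *ᵥ x) = (η:ℂ) * (S:ℂ) := by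
    rw [hBtB, Matrix.add_mulVec, Matrix.smul_mulVec, Matrix.smul_mulVec,
      Matrix.one_mulVec, hJx]
    have : (fun _ => σ : Fin v → ℂ) = 0 := by
      ext i; simp [hσ0]
    rw [this, smul_zero, add_zero, dotProduct_smul, hSx, smul_eq_mul]
  have wayB : star x ⬝ᵥ ((Bcᵀ * Bc) *ᵥ x) = (starRingEnd ℂ ν) * ν * (S:ℂ) := by
    rw [← Matrix.mulVec_mulVec, hev, Matrix.mulVec_smul, dotProduct_smul, smul_eq_mul,
      Matrix.dotProduct_mulVec, Matrix.vecMul_transpose, nrd_mulVec_star_C, hev]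
    rw [star_smul, smul_dotProduct, smul_eq_mul, hSx]
    ring_nf
    rw [Complex.star_def]
    ring
  have hkey : (Complex.normSq ν : ℂ) * (S:ℂ) = (η:ℂ) * (S:ℂ) := by
    rw [← wayA, wayB, Complex.normSq_eq_conj_mul_self]
  have hSC : ((S:ℂ)) ≠ 0 := by exact_mod_cast hS0
  have hνsq : Complex.normSq ν = η := by
    have := mul_right_cancel₀ hSC hkey
    exact_mod_cast this
  rw [Complex.norm_def, hνsq]

end NRDhelpers

/-- Every eigenvalue θ ≠ k of a normally regular digraph lies on the circle
    with centre λ − μ and radius √η, where η = k − μ + (μ−λ)². -/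
theorem stmt12 (v : ℕ) (k l m : ℤ) (A : Matrix (Fin v) (Fin v) ℝ)
    (h : IsNRD v k l m A) (θ : ℂ) (x : Fin v → ℂ) (hx : x ≠ 0)
    (hev : (A.map (Complex.ofReal)).mulVec x = θ • x) (hθ : θ ≠ (k : ℂ)) :
    ‖θ - ((l : ℂ) - (m : ℂ))‖ =
      Real.sqrt ((k : ℝ) - (m : ℝ) + ((m : ℝ) - (l : ℝ)) ^ 2) := by
  obtain ⟨h01, hdiag, heqn⟩ := h
  -- dispose of v = 0
  rcases Nat.eq_zero_or_pos v with h0 | hv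
  · obtain ⟨i, -⟩ := Function.ne_iff.mp hx
    exact absurd i.isLt (by omega)
  -- row sums of A are k
  have hrowA : ∀ i, ∑ j, A i j = (k:ℝ) := by
    intro i
    have hE := nrd_entry_of_eq heqn i i
    have hL : (A * Aᵀ) i i = ∑ j, A i j := by
      rw [Matrix.mul_apply]
      refine Finset.sum_congr rfl fun j _ => ?_
      rw [Matrix.transpose_apply]
      rcases h01 i j with h0 | h1
      · rw [h0]; ring
      · rw [h1]; ring
    rw [hL] at hE
    rw [hE]
    simp [Matrix.add_apply, Matrix.sub_apply, Matrix.smul_apply, Matrix.one_apply,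
      Matrix.transpose_apply, nrd_allOnes_apply, hdiag i]
  -- dispose of v = 1
  rcases Nat.lt_or_ge v 2 with hv2' | hv2
  · exfalso
    have hv1 : v = 1 := by omega
    subst hv1
    have hA0 : A = 0 := by
      ext i j
      have hij : i = j := Subsingleton.elim i j
      rw [hij]
      exact hdiag j
    have hk0 : k = 0 := by
      have h1 := hrowA 0
      rw [hA0] at h1
      simp at h1
      exact_mod_cast h1.symm
    obtain ⟨i, hi⟩ := Function.ne_iff.mp hx
    have hθ0 : θ * x i = 0 := by
      have h2 := congrFun hev i
      rw [hA0] at h2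
      simp only [Matrix.mulVec, dotProduct, Matrix.map_apply, Matrix.zero_apply,
        Complex.ofReal_zero, zero_mul, Finset.sum_const_zero, Pi.smul_apply, smul_eq_mul] at h2
      exact h2.symm
    rcases mul_eq_zero.mp hθ0 with h2 | h2
    · exact hθ (by rw [h2, hk0]; simp)
    · exact hi h2
  -- main case : v ≥ 2
  set η : ℝ := (k : ℝ) - (m : ℝ) + ((m : ℝ) - (l : ℝ)) ^ 2 with hηdef
  set c : ℝ := (m : ℝ) - (l : ℝ) with hcdef
  set κ : ℝ := (k : ℝ) + c with hκdef
  set B : Matrix (Fin v) (Fin v) ℝ := A + c • 1 with hBdef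
  set ν : ℂ := θ + ((m:ℂ) - (l:ℂ)) with hνdef
  set J : Matrix (Fin v) (Fin v) ℝ := allOnes v with hJdef
  -- row sums of B are κ
  have hrowB : ∀ i, ∑ j, B i j = κ := by
    intro i
    rw [hBdef, hκdef]
    simp [Matrix.add_apply, Matrix.smul_apply, Matrix.one_apply, smul_eq_mul,
      Finset.sum_add_distrib, hrowA i, mul_ite, mul_one, mul_zero]
  -- B * J = κ • J
  have hBJ : B * J = κ • J := by
    ext i j
    rw [Matrix.mul_apply]
    simp only [hJdef, nrd_allOnes_apply, mul_one, Matrix.smul_apply, smul_eq_mul]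
    exact hrowB i
  -- B * Bᵀ = η • 1 + m • J
  have hBB : B * Bᵀ = η • 1 + (m:ℝ) • J := by
    rw [hBdef]
    rw [Matrix.transpose_add, Matrix.transpose_smul, Matrix.transpose_one]
    rw [Matrix.add_mul, Matrix.mul_add, Matrix.mul_add]
    rw [heqn]
    simp only [Matrix.smul_mul, Matrix.mul_smul, Matrix.mul_one, Matrix.one_mul, smul_smul,
      hJdef]
    rw [hηdef, hcdef]
    match_scalars <;> push_cast <;> ring
  -- complexified eigenvector equation for B
  have hevB : (B.map Complex.ofReal) *ᵥ x = ν • x := by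
    rw [hBdef, Matrix.map_add _ Complex.ofReal_add, nrd_map_smul_C, nrd_map_one_C]
    rw [Matrix.add_mulVec, Matrix.smul_mulVec, Matrix.one_mulVec, hev, hνdef, hcdef]
    ext i
    simp only [Pi.add_apply, Pi.smul_apply, smul_eq_mul]
    push_cast
    ring
  -- ν ≠ κ
  have hν : ν ≠ (κ:ℂ) := by
    rw [hνdef, hκdef, hcdef]
    intro hcon
    apply hθ
    push_cast at hcon
    linear_combination hcon
  -- reduce the goal
  have hgoal : θ - ((l : ℂ) - (m : ℂ)) = ν := by rw [hνdef]; ring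
  rw [hgoal]
  -- entries of B * Bᵀ
  have hBBent : ∀ a b, (∑ j, B a j * B b j) = (if a = b then η else 0) + (m:ℝ) := by
    intro a b
    have h1 := nrd_entry_of_eq hBB a b
    rw [Matrix.mul_apply] at h1
    simp only [Matrix.transpose_apply] at h1
    rw [h1]
    simp [Matrix.add_apply, Matrix.smul_apply, Matrix.one_apply, hJdef, nrd_allOnes_apply,
      mul_ite, mul_one, mul_zero]
  -- sums of squares of row differences
  have hsq : ∀ a b, a ≠ b → ∑ j, (B a j - B b j)^2 = 2*η := by
    intro a b hab
    rw [Finset.sum_congr rfl (fun j _ => (by ring :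
      (B a j - B b j)^2 = (B a j * B a j - 2*(B a j * B b j)) + B b j * B b j))]
    rw [Finset.sum_add_distrib, Finset.sum_sub_distrib, ← Finset.mul_sum]
    rw [hBBent a a, hBBent a b, hBBent b b]
    simp only [if_neg hab, eq_self_iff_true, if_true]
    ring
  -- η ≥ 0
  have hη0 : 0 ≤ η := by
    have hne01 : (⟨0, by omega⟩ : Fin v) ≠ (⟨1, by omega⟩ : Fin v) := by
      simp [Fin.ext_iff]
    have h2 := hsq ⟨0, by omega⟩ ⟨1, by omega⟩ hne01
    have h3 : 0 ≤ ∑ j, (B ⟨0, by omega⟩ j - B ⟨1, by omega⟩ j)^2 :=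
      Finset.sum_nonneg fun j _ => sq_nonneg _
    linarith
  rcases eq_or_lt_of_le hη0 with hηeq | hηpos
  · -- case η = 0 : all rows of B are equal, so ν = 0
    have hBrows : ∀ a b j, B a j = B b j := by
      intro a b j
      rcases eq_or_ne a b with rfl | hab
      · rfl
      · have h0 : ∑ j, (B a j - B b j)^2 = 0 := by rw [hsq a b hab, ← hηeq]; ring
        have h1 := (Finset.sum_eq_zero_iff_of_nonneg
          (fun j _ => sq_nonneg (B a j - B b j))).mp h0 j (Finset.mem_univ j)
        have h2 : B a j - B b j = 0 := by
          exact pow_eq_zero_iff (two_ne_zero) |>.mp h1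
        linarith
    have hν0 : ν = 0 := by
      by_contra hne0
      obtain ⟨i, hi⟩ := Function.ne_iff.mp hx
      have hxconst : ∀ a, x a = x i := by
        intro a
        have ea := congrFun hevB a
        have eb := congrFun hevB i
        have hsame : (B.map Complex.ofReal *ᵥ x) a = (B.map Complex.ofReal *ᵥ x) i := by
          simp only [Matrix.mulVec, dotProduct, Matrix.map_apply]
          exact Finset.sum_congr rfl fun j _ => by rw [hBrows a i j]
        rw [ea, eb] at hsame
        simp only [Pi.smul_apply, smul_eq_mul] at hsame
        exact mul_left_cancel₀ hne0 hsame
      have hkey : (κ:ℂ) * x i = ν * x i := by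
        calc (κ:ℂ) * x i = (∑ j, ((B i j : ℝ) : ℂ)) * x i := by
              norm_cast
              rw [hrowB i]
          _ = ∑ j, ((B i j : ℂ) * x j) := by
              rw [Finset.sum_mul]
              exact Finset.sum_congr rfl fun j _ => by rw [hxconst j]
          _ = (B.map Complex.ofReal *ᵥ x) i := by
              simp [Matrix.mulVec, dotProduct, Matrix.map_apply]
          _ = ν * x i := by rw [hevB]; simp
      exact hν ((mul_right_cancel₀ hi hkey).symm)
    rw [hν0, ← hηeq]
    simp
  · -- case η > 0
    have hv0 : 0 < v := hv
    -- η + m v ≥ 0 via column sums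
    set one1 : Fin v → ℝ := fun _ => 1 with hone1
    set t : Fin v → ℝ := Bᵀ *ᵥ one1 with htdef
    have hBBone : (B * Bᵀ) *ᵥ one1 = fun _ => η + (m:ℝ) * v := by
      rw [hBB]
      ext i
      simp [Matrix.mulVec, dotProduct, Matrix.add_apply, Matrix.smul_apply,
        Matrix.one_apply, hJdef, nrd_allOnes_apply, Finset.sum_add_distrib,
        Finset.sum_ite_eq, hone1, mul_one]
      ring
    have htt : t ⬝ᵥ t = (v:ℝ) * (η + (m:ℝ)*(v:ℝ)) := by
      have h1 : one1 ⬝ᵥ ((B * Bᵀ) *ᵥ one1) = t ⬝ᵥ t := by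
        rw [← Matrix.mulVec_mulVec, Matrix.dotProduct_mulVec]
        congr 1
        rw [htdef, Matrix.mulVec_transpose]
      rw [← h1, hBBone]
      simp [dotProduct, hone1, Finset.sum_const, Finset.card_fin]
      ring
    have htt0 : (0:ℝ) ≤ t ⬝ᵥ t := Finset.sum_nonneg fun j _ => mul_self_nonneg _
    have hvR : (0:ℝ) < (v:ℝ) := by exact_mod_cast hv0
    have hημ0 : 0 ≤ η + (m:ℝ)*(v:ℝ) := by nlinarith [htt]
    rcases eq_or_lt_of_le hημ0 with hzeq | hμpos
    · -- degenerate case η + m v = 0 : column sums are zero; perturb by J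
      have ht0 : ∀ j, t j = 0 := by
        have hz : t ⬝ᵥ t = 0 := by rw [htt, ← hzeq, mul_zero]
        intro j
        have := (Finset.sum_eq_zero_iff_of_nonneg
          (fun j _ => mul_self_nonneg (t j))).mp hz j (Finset.mem_univ j)
        exact mul_self_eq_zero.mp this
      have hJB0 : J * B = 0 := by
        ext i j
        rw [Matrix.mul_apply]
        simp only [hJdef, nrd_allOnes_apply, one_mul, Matrix.zero_apply]
        have h5 := ht0 j
        simpa [htdef, Matrix.mulVec, dotProduct, Matrix.transpose_apply, hone1,
          mul_one] using h5
      have hvne : ((v:ℝ)) ≠ 0 := ne_of_gt hvR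
      have hκ0 : κ = 0 := by
        have e6 : (J * B) * J = J * (B * J) := Matrix.mul_assoc J B J
        rw [hJB0, hBJ, Matrix.zero_mul, Matrix.mul_smul] at e6
        have h8 : (J*J) = (v:ℝ)•J := nrd_allOnes_mul_allOnes
        rw [h8] at e6
        have h7 := nrd_entry_of_eq e6 ⟨0, by omega⟩ ⟨0, by omega⟩
        simp only [Matrix.zero_apply, Matrix.smul_apply, hJdef, nrd_allOnes_apply,
          smul_eq_mul, mul_one] at h7
        rcases mul_eq_zero.mp h7.symm with h | h
        · exact h
        · exact absurd h hvne
      have hBJ0 : B * J = 0 := by rw [hBJ, hκ0, zero_smul]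
      have hJBt0 : J * Bᵀ = 0 := by
        have h9 : (B * J)ᵀ = (0 : Matrix (Fin v) (Fin v) ℝ)ᵀ := by rw [hBJ0]
        simpa [Matrix.transpose_mul, hJdef, nrd_transpose_allOnes] using h9
      have hBtJ0 : Bᵀ * J = 0 := by
        have h9 : (J * B)ᵀ = (0 : Matrix (Fin v) (Fin v) ℝ)ᵀ := by rw [hJB0]
        simpa [Matrix.transpose_mul, hJdef, nrd_transpose_allOnes] using h9
      set B' : Matrix (Fin v) (Fin v) ℝ := B + J with hB'def
      have hB'B' : B' * B'ᵀ = η • 1 + ((m:ℝ)+(v:ℝ)) • J := by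
        rw [hB'def, Matrix.transpose_add]
        have hJt : Jᵀ = J := by rw [hJdef, nrd_transpose_allOnes]
        rw [hJt, Matrix.add_mul, Matrix.mul_add, Matrix.mul_add, hBB, hBJ0, hJBt0]
        have h8 : (J*J) = (v:ℝ)•J := nrd_allOnes_mul_allOnes
        rw [h8]
        match_scalars <;> ring
      have hB'J : B' * J = (v:ℝ) • J := by
        rw [hB'def, Matrix.add_mul, hBJ0]
        have h8 : (J*J) = (v:ℝ)•J := nrd_allOnes_mul_allOnes
        rw [h8, zero_add]
      have hB'pos : 0 < η + ((m:ℝ)+(v:ℝ)) * (v:ℝ) := by nlinarith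
      obtain ⟨hN', hJB'⟩ := nrd_key hv0 B' η ((m:ℝ)+(v:ℝ)) (v:ℝ) hηpos hB'pos hB'B' hB'J
      have hB'tJ : B'ᵀ * J = (v:ℝ) • J := by
        have h9 : (J * B')ᵀ = ((v:ℝ) • J)ᵀ := by rw [hJB']
        simpa [Matrix.transpose_mul, Matrix.transpose_smul, hJdef, nrd_transpose_allOnes]
          using h9
      have hN : Bᵀ * B = η • 1 + (m:ℝ) • J := by
        have hBeq : B = B' - J := by rw [hB'def]; abel
        rw [hBeq, Matrix.transpose_sub]
        have hJt : Jᵀ = J := by rw [hJdef, nrd_transpose_allOnes]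
        rw [hJt, Matrix.sub_mul, Matrix.mul_sub, Matrix.mul_sub, hN', hB'tJ, hJB']
        have h8 : (J*J) = (v:ℝ)•J := nrd_allOnes_mul_allOnes
        rw [h8]
        match_scalars <;> ring
      have hJBκ : J * B = κ • J := by rw [hJB0, hκ0, zero_smul]
      exact nrd_final hv0 B η (m:ℝ) κ hN hJBκ x hx ν hevB hν
    · -- generic case
      obtain ⟨hN, hJBκ⟩ := nrd_key hv0 B η (m:ℝ) κ hηpos hμpos hBB hBJ
      exact nrd_final hv0 B η (m:ℝ) κ hN hJBκ x hx ν hevB hν
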